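/- Fix λ > 0 and d > 0 and define f(γ) = 4λγ·arccos(d/γ)·exp(−2λd²·((γ/d)²·arccos(d/γ) − √((γ/d)² − 1))) for γ ≥ d (the density of the optimum channel quality indicator). Then lim_{γ → ∞} (−log f(γ))/γ² = πλ; that is, the tail of f decays like a Gaussian with rate πλ. -/

import Mathlib

open Real Filter

set_option maxHeartbeats 1000000 in
/-- Gaussian tail of the density of `Γ_opt`: with
`f(γ) = 4λγ arccos (d/γ) exp(−2λd²((γ/d)² arccos (d/γ) − √((γ/d)² − 1)))`,
one has `(−log f(γ))/γ² → πλ` as `γ → ∞`. -/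
theorem gamma_opt_density_tail (lam d : ℝ) (hlam : 0 < lam) (hd : 0 < d) :
    Tendsto (fun γ : ℝ =>
        -Real.log (4 * lam * γ * Real.arccos (d / γ) *
            Real.exp (-(2 * lam * d ^ 2 *
              ((γ / d) ^ 2 * Real.arccos (d / γ) - Real.sqrt ((γ / d) ^ 2 - 1))))) / γ ^ 2)
      atTop (nhds (π * lam)) := by
  have hd' : d ≠ 0 := hd.ne'
  -- d/γ → 0
  have h1 : Tendsto (fun γ : ℝ => d / γ) atTop (nhds 0) :=
    tendsto_const_nhds.div_atTop tendsto_id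
  -- arccos (d/γ) → π/2
  have hA : Tendsto (fun γ : ℝ => Real.arccos (d / γ)) atTop (nhds (π / 2)) := by
    have := (Real.continuous_arccos.tendsto 0).comp h1
    simpa [Real.arccos_zero, Function.comp_def] using this
  have hinv : Tendsto (fun γ : ℝ => (γ ^ 2)⁻¹) atTop (nhds 0) :=
    (tendsto_pow_atTop two_ne_zero).inv_tendsto_atTop
  -- piece 1: log (4λ) / γ² → 0
  have hc1 : Tendsto (fun γ : ℝ => Real.log (4 * lam) * (γ ^ 2)⁻¹) atTop (nhds 0) := by
    simpa using tendsto_const_nhds.mul hinv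
  -- piece 2: log γ / γ² → 0
  have hlog : Tendsto (fun γ : ℝ => Real.log γ / γ) atTop (nhds 0) :=
    Real.isLittleO_log_id_atTop.tendsto_div_nhds_zero
  have hc2 : Tendsto (fun γ : ℝ => Real.log γ * (γ ^ 2)⁻¹) atTop (nhds 0) := by
    have h := hlog.mul (tendsto_const_nhds.div_atTop (f := fun _ : ℝ => (1:ℝ)) tendsto_id)
    rw [mul_zero] at h
    refine h.congr' ?_
    filter_upwards [eventually_gt_atTop (0:ℝ)] with γ hγ
    simp only [id_eq]
    rw [sq, mul_inv, one_div, div_eq_mul_inv]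
    ring
  -- piece 3: log (arccos (d/γ)) / γ² → 0
  have hc3 : Tendsto (fun γ : ℝ => Real.log (Real.arccos (d / γ)) * (γ ^ 2)⁻¹)
      atTop (nhds 0) := by
    have hlA : Tendsto (fun γ : ℝ => Real.log (Real.arccos (d / γ))) atTop
        (nhds (Real.log (π / 2))) :=
      ((Real.continuousAt_log (by positivity)).tendsto).comp hA
    simpa using hlA.mul hinv
  -- piece 4: 2λ arccos (d/γ) → π λ
  have hT2 : Tendsto (fun γ : ℝ => 2 * lam * Real.arccos (d / γ)) atTop (nhds (π * lam)) := by
    have h := (tendsto_const_nhds (x := 2 * lam) (f := atTop)).mul hA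
    have he : 2 * lam * (π / 2) = π * lam := by ring
    rwa [he] at h
  -- piece 5: 2 λ d² √((γ/d)²−1) / γ² → 0
  have hT3 : Tendsto (fun γ : ℝ => 2 * lam * d ^ 2 * Real.sqrt ((γ / d) ^ 2 - 1) * (γ ^ 2)⁻¹)
      atTop (nhds 0) := by
    have hup : Tendsto (fun γ : ℝ => 2 * lam * d / γ) atTop (nhds 0) :=
      tendsto_const_nhds.div_atTop tendsto_id
    refine tendsto_of_tendsto_of_tendsto_of_le_of_le' tendsto_const_nhds hup ?_ ?_
    · filter_upwards [eventually_gt_atTop (0:ℝ)] with γ hγ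
      positivity
    · filter_upwards [eventually_gt_atTop (max d 0)] with γ hγ
      have hγ0 : 0 < γ := lt_of_le_of_lt (le_max_right d 0) hγ
      have hs : Real.sqrt ((γ / d) ^ 2 - 1) ≤ γ / d := by
        have : Real.sqrt ((γ / d) ^ 2 - 1) ≤ Real.sqrt ((γ / d) ^ 2) :=
          Real.sqrt_le_sqrt (by linarith)
        rwa [Real.sqrt_sq (by positivity)] at this
      have h2 : 2 * lam * d ^ 2 * Real.sqrt ((γ / d) ^ 2 - 1) ≤ 2 * lam * d * γ := by
        calc 2 * lam * d ^ 2 * Real.sqrt ((γ / d) ^ 2 - 1)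
            ≤ 2 * lam * d ^ 2 * (γ / d) := by
              apply mul_le_mul_of_nonneg_left hs (by positivity)
          _ = 2 * lam * d * γ := by field_simp
      calc 2 * lam * d ^ 2 * Real.sqrt ((γ / d) ^ 2 - 1) * (γ ^ 2)⁻¹
          ≤ 2 * lam * d * γ * (γ ^ 2)⁻¹ := by
            apply mul_le_mul_of_nonneg_right h2 (by positivity)
        _ = 2 * lam * d / γ := by field_simp
  -- combined limit of the explicit expression
  have hG : Tendsto (fun γ : ℝ =>
      -(Real.log (4 * lam) * (γ ^ 2)⁻¹) - Real.log γ * (γ ^ 2)⁻¹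
        - Real.log (Real.arccos (d / γ)) * (γ ^ 2)⁻¹
        + 2 * lam * Real.arccos (d / γ)
        - 2 * lam * d ^ 2 * Real.sqrt ((γ / d) ^ 2 - 1) * (γ ^ 2)⁻¹)
      atTop (nhds (π * lam)) := by
    have := (((hc1.neg.sub hc2).sub hc3).add hT2).sub hT3
    simpa using this
  refine hG.congr' ?_
  filter_upwards [eventually_gt_atTop (max d 1)] with γ hγ
  have hγd : d < γ := lt_of_le_of_lt (le_max_left d 1) hγ
  have hγ1 : 1 < γ := lt_of_le_of_lt (le_max_right d 1) hγ
  have hγ0 : 0 < γ := lt_trans one_pos hγ1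
  have hA0 : 0 < Real.arccos (d / γ) := Real.arccos_pos.2 ((div_lt_one hγ0).2 hγd)
  have h4 : (4 : ℝ) * lam ≠ 0 := by positivity
  rw [Real.log_mul (by positivity) (Real.exp_ne_zero _), Real.log_exp,
    Real.log_mul (by positivity) hA0.ne', Real.log_mul h4 hγ0.ne']
  field_simp
  ring
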